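/- Let S : ℝ² → ℂ and u : ℝ → ℂ be functions, fix (ω_x, ω_y) ∈ ℝ², and let B_s ≥ 0, C_s ≥ 0. Assume: ∑_{p∈ℤ} |u(ω_x + 2pπ)|² = 1 and ∑_{q∈ℤ} |u(ω_y + 2qπ)|² = 1; |S(ω_x, ω_y)| ≤ B_s; and ∑_{(p,q)∈ℤ², (p,q)≠(0,0)} |S(ω_x + 2pπ, ω_y + 2qπ)|² ≤ C_s. Then the family (S(ω_x + 2pπ, ω_y + 2qπ)·conj(u(ω_x + 2pπ))·conj(u(ω_y + 2qπ)))_{(p,q)∈ℤ²} is summable and its sum F₁(ω_x, ω_y) satisfies |F₁(ω_x, ω_y)| ≤ √(B_s² + C_s). -/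

import Mathlib

set_option maxHeartbeats 1000000


open Real

/-- Cauchy–Schwarz for tsums of nonneg reals. -/
lemma tsum_mul_le_sqrt_mul_sqrt' {ι : Type*} (f g : ι → ℝ)
    (hf0 : ∀ i, 0 ≤ f i) (hg0 : ∀ i, 0 ≤ g i)
    (hf : Summable (fun i => f i ^ 2)) (hg : Summable (fun i => g i ^ 2))
    (hfg : Summable (fun i => f i * g i)) :
    ∑' i, f i * g i ≤ Real.sqrt (∑' i, f i ^ 2) * Real.sqrt (∑' i, g i ^ 2) := by
  refine Summable.tsum_le_of_sum_le hfg fun s => ?_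
  calc ∑ i ∈ s, f i * g i
      ≤ Real.sqrt (∑ i ∈ s, f i ^ 2) * Real.sqrt (∑ i ∈ s, g i ^ 2) :=
        Real.sum_mul_le_sqrt_mul_sqrt s f g
    _ ≤ Real.sqrt (∑' i, f i ^ 2) * Real.sqrt (∑' i, g i ^ 2) := by
        gcongr <;> first
          | exact Real.sqrt_nonneg _
          | exact Summable.sum_le_tsum s (fun i _ => by positivity) ‹_›

/-- Upper bound on the prefilter frequency response `F₁` (Appendix C of the
paper, part of Proposition 5), proved via the Cauchy–Schwarz inequality. -/
theorem stmt_15 (S : ℝ × ℝ → ℂ) (u : ℝ → ℂ) (ωx ωy : ℝ) (Bs Cs : ℝ)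
    (hBs : 0 ≤ Bs) (hCs : 0 ≤ Cs)
    (hux : HasSum (fun p : ℤ => ‖u (ωx + 2 * p * π)‖ ^ 2) 1)
    (huy : HasSum (fun q : ℤ => ‖u (ωy + 2 * q * π)‖ ^ 2) 1)
    (hS0 : ‖S (ωx, ωy)‖ ≤ Bs)
    (hStail : ∃ c : ℝ, c ≤ Cs ∧ HasSum (fun pq : ℤ × ℤ =>
      if pq = (0, 0) then 0
      else ‖S (ωx + 2 * pq.1 * π, ωy + 2 * pq.2 * π)‖ ^ 2) c) :
    ∃ F₁ : ℂ, HasSum (fun pq : ℤ × ℤ =>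
        S (ωx + 2 * pq.1 * π, ωy + 2 * pq.2 * π) *
          (starRingEnd ℂ) (u (ωx + 2 * pq.1 * π)) *
          (starRingEnd ℂ) (u (ωy + 2 * pq.2 * π))) F₁ ∧
      ‖F₁‖ ≤ Real.sqrt (Bs ^ 2 + Cs) := by

  obtain ⟨c, hcCs, hc⟩ := hStail
  set a : ℤ × ℤ → ℝ := fun pq => ‖S (ωx + 2 * pq.1 * π, ωy + 2 * pq.2 * π)‖
  set b : ℤ × ℤ → ℝ := fun pq =>
    ‖u (ωx + 2 * pq.1 * π)‖ * ‖u (ωy + 2 * pq.2 * π)‖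
  have ha0 : ∀ pq, 0 ≤ a pq := fun pq => norm_nonneg _
  have hb0 : ∀ pq, 0 ≤ b pq := fun pq => mul_nonneg (norm_nonneg _) (norm_nonneg _)
  -- HasSum of a² = (S(ω))²·δ₀ + tail
  have h00 : a (0, 0) = ‖S (ωx, ωy)‖ := by
    simp [a]
  have hδ : HasSum (fun pq : ℤ × ℤ => if pq = (0, 0) then a (0,0) ^ 2 else 0)
      (a (0,0) ^ 2) := hasSum_ite_eq (0, 0) _
  have hasq : HasSum (fun pq => a pq ^ 2) (a (0,0) ^ 2 + c) := by
    have heq : (fun pq : ℤ × ℤ => (if pq = (0, 0) then a (0,0) ^ 2 else 0) +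
        (if pq = (0, 0) then 0
          else ‖S (ωx + 2 * pq.1 * π, ωy + 2 * pq.2 * π)‖ ^ 2))
        = fun pq => a pq ^ 2 := by
      funext pq
      by_cases h : pq = (0, 0)
      · subst h; simp
      · rw [if_neg h, if_neg h, zero_add]
    exact heq ▸ (hδ.add hc)
  have hA : a (0,0) ^ 2 + c ≤ Bs ^ 2 + Cs := by
    rw [h00]
    have := norm_nonneg (S (ωx, ωy))
    nlinarith
  -- HasSum of b² = 1
  have hbsq : HasSum (fun pq : ℤ × ℤ => b pq ^ 2) 1 := by
    have hsum2 : Summable (fun pq : ℤ × ℤ =>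
        ‖u (ωx + 2 * pq.1 * π)‖ ^ 2 * ‖u (ωy + 2 * pq.2 * π)‖ ^ 2) :=
      hux.summable.mul_of_nonneg huy.summable
        (fun p => by positivity) (fun q => by positivity)
    have h := hux.mul huy hsum2
    rw [one_mul] at h
    have heq : (fun pq : ℤ × ℤ =>
        ‖u (ωx + 2 * pq.1 * π)‖ ^ 2 * ‖u (ωy + 2 * pq.2 * π)‖ ^ 2)
        = fun pq => b pq ^ 2 := by
      funext pq; simp [b, mul_pow]
    exact heq ▸ h
  -- plus summability of a*b
  have hab : Summable (fun pq => a pq * b pq) := by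
    apply Summable.of_nonneg_of_le (fun pq => mul_nonneg (ha0 pq) (hb0 pq))
      (fun pq => ?_) ((hasq.summable.add hbsq.summable).mul_left (1/2))
    have := sq_nonneg (a pq - b pq)
    nlinarith [ha0 pq, hb0 pq]
  -- summability of the complex family
  have hnorm : ∀ pq : ℤ × ℤ, ‖S (ωx + 2 * pq.1 * π, ωy + 2 * pq.2 * π) *
      (starRingEnd ℂ) (u (ωx + 2 * pq.1 * π)) *
      (starRingEnd ℂ) (u (ωy + 2 * pq.2 * π))‖ = a pq * b pq := by
    intro pq
    simp [a, b, map_mul, mul_assoc]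
  have hsummable : Summable (fun pq : ℤ × ℤ =>
      S (ωx + 2 * pq.1 * π, ωy + 2 * pq.2 * π) *
        (starRingEnd ℂ) (u (ωx + 2 * pq.1 * π)) *
        (starRingEnd ℂ) (u (ωy + 2 * pq.2 * π))) := by
    apply Summable.of_norm
    simpa only [hnorm] using hab
  refine ⟨_, hsummable.hasSum, ?_⟩
  calc ‖∑' pq : ℤ × ℤ, _‖
      ≤ ∑' pq : ℤ × ℤ, a pq * b pq := by
        refine (norm_tsum_le_tsum_norm ?_).trans_eq (tsum_congr hnorm)
        simpa only [hnorm] using hab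
    _ ≤ Real.sqrt (∑' pq, a pq ^ 2) * Real.sqrt (∑' pq, b pq ^ 2) :=
        tsum_mul_le_sqrt_mul_sqrt' a b ha0 hb0 hasq.summable hbsq.summable hab
    _ ≤ Real.sqrt (Bs ^ 2 + Cs) := by
        rw [hasq.tsum_eq, hbsq.tsum_eq, Real.sqrt_one, mul_one]
        exact Real.sqrt_le_sqrt hA
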